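/- Let B be an abelian group of the form ℤ/2^{k} ⊕ C, and let 0 → ℤ/2 → A → B → 0 be a short exact sequence classified (via the Eilenberg–MacLane correspondence Ext(B, ℤ/2) ≅ Hom(Tor₂(B), ℤ/2)) by a homomorphism φ: Tor₂(B) → ℤ/2 that is nonzero on the 2-torsion element 2^{k−1} of the summand ℤ/2^{k} and zero on Tor₂(C). Then A ≅ ℤ/2^{k+1} ⊕ C. -/

import Mathlib

/-- Let `B = ℤ/2^k ⊕ C` and let `0 → ℤ/2 → A → B → 0` be a short exact
sequence whose classifying homomorphism `φ : Tor₂(B) → ℤ/2` is nonzero on the 2-torsion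
element `2^(k-1)` of `ℤ/2^k` (i.e. `2a = u 1` for lifts `a` of `(2^(k-1), 0)`) and zero
on `Tor₂(C)` (i.e. `2a = 0` for lifts of `(0, c)` with `2c = 0`). Then
`A ≅ ℤ/2^(k+1) ⊕ C`. -/
theorem stmt14 (k : ℕ) (hk : 1 ≤ k) {C A : Type*} [AddCommGroup C] [AddCommGroup A]
    (u : ZMod 2 →+ A) (h : A →+ ZMod (2 ^ k) × C)
    (hu : Function.Injective u) (hh : Function.Surjective h)
    (hex : u.range = h.ker)
    (hφ1 : ∀ a : A, h a = ((2 ^ (k - 1) : ZMod (2 ^ k)), 0) → 2 • a = u 1)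
    (hφ2 : ∀ c : C, 2 • c = 0 → ∀ a : A, h a = (0, c) → 2 • a = 0) :
    Nonempty (A ≃+ ZMod (2 ^ (k + 1)) × C) := by
  classical
  haveI : NeZero (2 ^ k) := ⟨by positivity⟩
  haveI : NeZero (2 ^ (k + 1)) := ⟨by positivity⟩
  set t : A := u 1 with ht
  have htt : t + t = 0 := by
    rw [ht, ← u.map_add, show (1 + 1 : ZMod 2) = 0 from by decide, u.map_zero]
  have htne : t ≠ 0 := by
    intro h0
    have h1 : (1 : ZMod 2) = 0 := hu (by rw [u.map_zero]; exact h0)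
    exact absurd h1 (by decide)
  have ht0 : h t = 0 := by
    have : t ∈ h.ker := hex ▸ ⟨1, rfl⟩
    exact this
  have hker : ∀ x : A, h x = 0 → x = 0 ∨ x = t := by
    intro x hx
    have hx' : x ∈ h.ker := hx
    rw [← hex] at hx'
    obtain ⟨s, rfl⟩ := hx'
    rcases (show ∀ s : ZMod 2, s = 0 ∨ s = 1 from by decide) s with rfl | rfl
    · exact Or.inl (u.map_zero)
    · exact Or.inr rfl
  -- the generator `a` of the cyclic part
  obtain ⟨a, ha⟩ := hh ((1 : ZMod (2 ^ k)), (0 : C))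
  have hna : ∀ n : ℕ, h (n • a) = ((n : ZMod (2 ^ k)), 0) := by
    intro n
    rw [map_nsmul, ha, Prod.smul_mk, smul_zero, nsmul_eq_mul, mul_one]
  have hza : ∀ n : ℤ, h (n • a) = ((n : ZMod (2 ^ k)), 0) := by
    intro n
    rw [map_zsmul, ha, Prod.smul_mk, smul_zero, zsmul_eq_mul, mul_one]
  have hmul : 2 * 2 ^ (k - 1) = 2 ^ k := by
    rw [mul_comm, ← pow_succ, Nat.sub_add_cancel hk]
  have h2k : (2 ^ k) • a = t := by
    have h1 : h ((2 ^ (k - 1)) • a) = ((2 ^ (k - 1) : ZMod (2 ^ k)), 0) := by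
      rw [hna]
      push_cast
      ring_nf
    have h2 := hφ1 _ h1
    rw [smul_smul, hmul] at h2
    exact h2
  have h2k1 : (2 ^ (k + 1)) • a = 0 := by
    have hh1 : (2 ^ (k + 1)) • a = 2 • ((2 ^ k) • a) := by
      rw [← mul_smul, pow_succ, mul_comm]
    rw [hh1, h2k, two_nsmul, htt]
  -- order of a
  have hdvd : addOrderOf a ∣ 2 ^ (k + 1) := addOrderOf_dvd_of_nsmul_eq_zero h2k1
  have hndvd : ¬ addOrderOf a ∣ 2 ^ k := by
    intro hd
    have : (2 ^ k) • a = 0 := (addOrderOf_dvd_iff_nsmul_eq_zero).1 hd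
    rw [h2k] at this
    exact htne this
  have horder : addOrderOf a = 2 ^ (k + 1) := by
    obtain ⟨j, hj, hja⟩ := (Nat.dvd_prime_pow Nat.prime_two).1 hdvd
    have hjk : ¬ j ≤ k := by
      intro hjk
      exact hndvd (hja ▸ pow_dvd_pow 2 hjk)
    have : j = k + 1 := by omega
    rw [hja, this]
  -- the subgroup P = preimage of {0} × C
  set P : AddSubgroup A := ((AddMonoidHom.fst (ZMod (2 ^ k)) C).comp h).ker with hP
  have hPmem : ∀ x : A, x ∈ P ↔ (h x).1 = 0 := fun x => Iff.rfl
  have tP : t ∈ P := by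
    rw [hPmem, ht0]
    rfl
  have htnot2 : ∀ x ∈ P, ¬ (2 • x = t) := by
    intro x hx hxx
    have hhx : h x = (0, (h x).2) := Prod.ext ((hPmem x).1 hx) rfl
    have h2x : h (2 • x) = 0 := by rw [hxx, ht0]
    have hc : 2 • (h x).2 = 0 := by
      have : (h (2 • x)).2 = 2 • (h x).2 := by rw [map_nsmul]; rfl
      rw [h2x] at this
      exact this.symm
    have h0 := hφ2 (h x).2 hc x hhx
    rw [hxx] at h0
    exact htne h0
  -- the doubling subgroup D = 2P
  let dbl : A →+ A :=
    { toFun := fun x => x + x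
      map_zero' := by simp
      map_add' := fun x y => by abel }
  set D : AddSubgroup A := P.map dbl with hD
  have hDP : D ≤ P := by
    rintro _ ⟨x, hx, rfl⟩
    have hx1 : (h x).1 = 0 := (hPmem x).1 hx
    refine (hPmem _).2 ?_
    show (h (x + x)).1 = 0
    rw [map_add]
    show (h x).1 + (h x).1 = 0
    rw [hx1, add_zero]
  have htD : t ∉ D := by
    rintro ⟨x, hx, hxt⟩
    exact htnot2 x hx (by rw [two_nsmul]; exact hxt)
  -- Zorn's lemma: maximal S with 2P ≤ S ≤ P, t ∉ S
  set 𝒮 : Set (AddSubgroup A) := {S | S ≤ P ∧ D ≤ S ∧ t ∉ S} with h𝒮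
  have hDS : D ∈ 𝒮 := ⟨hDP, le_rfl, htD⟩
  obtain ⟨S, -, hSmax⟩ := zorn_le_nonempty₀ 𝒮 (by
    intro c hcs hchain y hy
    refine ⟨sSup c, ⟨?_, ?_, ?_⟩, fun z hz => le_sSup hz⟩
    · exact sSup_le fun z hz => (hcs hz).1
    · exact le_trans (hcs hy).2.1 (le_sSup hy)
    · intro htc
      obtain ⟨z, hzc, hz⟩ :=
        (AddSubgroup.mem_sSup_of_directedOn ⟨y, hy⟩ hchain.directedOn).1 htc
      exact (hcs hzc).2.2 hz) D hDS
  have hSP : S ≤ P := hSmax.prop.1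
  have hDleS : D ≤ S := hSmax.prop.2.1
  have htS : t ∉ S := hSmax.prop.2.2
  have h2eS : ∀ x ∈ P, (2 : ℤ) • x ∈ S := by
    intro x hx
    have : dbl x ∈ D := ⟨x, hx, rfl⟩
    have h2 : (2 : ℤ) • x = dbl x := by
      rw [two_zsmul]; rfl
    rw [h2]
    exact hDleS this
  -- key decomposition of P
  have hPdec : ∀ e ∈ P, ∃ s ∈ S, e = s ∨ e = s + t := by
    intro e he
    by_cases heS : e ∈ S
    · exact ⟨e, heS, Or.inl rfl⟩
    have htS' : t ∈ S ⊔ AddSubgroup.zmultiples e := by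
      by_contra hts
      have hmem : S ⊔ AddSubgroup.zmultiples e ∈ 𝒮 :=
        ⟨sup_le hSP (by rwa [AddSubgroup.zmultiples_le]),
          le_trans hDleS le_sup_left, hts⟩
      have hle : S ⊔ AddSubgroup.zmultiples e ≤ S := hSmax.2 hmem le_sup_left
      exact heS (hle (AddSubgroup.mem_sup_right (AddSubgroup.mem_zmultiples e)))
    obtain ⟨s, hsS, z, hz, hst⟩ := (AddSubgroup.mem_sup).1 htS'
    obtain ⟨n, rfl⟩ := (AddSubgroup.mem_zmultiples_iff).1 hz
    have h2e : (2 : ℤ) • e ∈ S := h2eS e he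
    have hsplit : n • e = (n / 2) • ((2 : ℤ) • e) + (n % 2) • e := by
      rw [smul_smul, ← add_smul, Int.ediv_mul_add_emod]
    rcases Int.emod_two_eq_zero_or_one n with hr | hr
    · exfalso
      rw [hr, zero_smul, add_zero] at hsplit
      have : n • e ∈ S := hsplit ▸ AddSubgroup.zsmul_mem S h2e (n / 2)
      exact htS (hst ▸ S.add_mem hsS this)
    · -- n • e = s₂ + e with s₂ ∈ S, and s + n•e = t, hence e = -(s + s₂) + t
      rw [hr, one_smul] at hsplit
      set s₂ : A := (n / 2) • ((2 : ℤ) • e) with hs₂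
      have hs₂S : s₂ ∈ S := AddSubgroup.zsmul_mem S h2e (n / 2)
      refine ⟨-(s + s₂), S.neg_mem (S.add_mem hsS hs₂S), Or.inr ?_⟩
      have : s + (s₂ + e) = t := by rw [← hst, hsplit]
      rw [← this]
      abel
  -- decomposition of A: every x = n • a + s with s ∈ S
  have hdecompA : ∀ x : A, ∃ (n : ℤ) (s : A), s ∈ S ∧ x = n • a + s := by
    intro x
    set m : ℕ := ((h x).1).val with hm
    have hcastm : ((m : ℕ) : ZMod (2 ^ k)) = (h x).1 := ZMod.natCast_rightInverse _
    have hxm : x - m • a ∈ P := by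
      refine (hPmem _).2 ?_
      rw [map_sub, hna]
      show (h x).1 - ((m : ℕ) : ZMod (2 ^ k)) = 0
      rw [hcastm, sub_self]
    obtain ⟨s, hsS, hcase⟩ := hPdec _ hxm
    rcases hcase with hcase | hcase
    · refine ⟨(m : ℤ), s, hsS, ?_⟩
      rw [natCast_zsmul, ← hcase]
      abel
    · refine ⟨(m : ℤ) + (2 ^ k : ℕ), s, hsS, ?_⟩
      rw [add_smul, natCast_zsmul, natCast_zsmul, h2k]
      have : x - m • a = s + t := hcase
      rw [show x = m • a + (s + t) from by rw [← this]; abel]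
      abel
  -- disjointness: n • a ∈ S implies n • a = 0
  have hdisj : ∀ n : ℤ, n • a ∈ S → n • a = 0 := by
    intro n hn
    have hcast : ((n : ℤ) : ZMod (2 ^ k)) = 0 := by
      have h1 := (hPmem _).1 (hSP hn)
      rw [hza] at h1
      exact h1
    obtain ⟨m, rfl⟩ : ((2 ^ k : ℕ) : ℤ) ∣ n :=
      (ZMod.intCast_zmod_eq_zero_iff_dvd n (2 ^ k)).1 hcast
    have hmt : ((2 ^ k : ℕ) * m : ℤ) • a = m • t := by
      rw [mul_comm, mul_smul, natCast_zsmul, h2k]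
    rcases Int.even_or_odd m with ⟨j, hj⟩ | ⟨j, hj⟩
    · rw [hmt, hj, add_smul, ← smul_add, htt, smul_zero]
    · exfalso
      have : ((2 ^ k : ℕ) * m : ℤ) • a = t := by
        rw [hmt, hj, add_smul, one_smul, show (2 * j : ℤ) = j + j from by ring,
          add_smul, ← smul_add, htt, smul_zero, zero_add]
      exact htS (this ▸ hn)
  -- S ≅ C
  let qS : S →+ C := ((AddMonoidHom.snd (ZMod (2 ^ k)) C).comp h).comp S.subtype
  have hqS : ∀ s : S, qS s = (h (s : A)).2 := fun s => rfl
  have qSinj : Function.Injective qS := by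
    rw [injective_iff_map_eq_zero]
    intro s hs
    have h1 : (h (s : A)).1 = 0 := (hPmem _).1 (hSP s.2)
    have h2 : (h (s : A)).2 = 0 := hs
    have h0 : h (s : A) = 0 := Prod.ext h1 h2
    rcases hker _ h0 with hz | hz
    · exact Subtype.ext hz
    · exact absurd (hz ▸ s.2) htS
  have qSsurj : Function.Surjective qS := by
    intro c
    obtain ⟨y, hy⟩ := hh (0, c)
    have hyP : y ∈ P := (hPmem y).2 (by rw [hy])
    obtain ⟨s, hsS, hcase⟩ := hPdec y hyP
    refine ⟨⟨s, hsS⟩, ?_⟩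
    rcases hcase with hcase | hcase
    · show (h s).2 = c
      rw [← hcase, hy]
    · show (h s).2 = c
      rw [show s = y - t from by rw [hcase]; abel, map_sub, ht0, sub_zero, hy]
  let eS : S ≃+ C := AddEquiv.ofBijective qS ⟨qSinj, qSsurj⟩
  -- the map ZMod (2^(k+1)) →+ A
  have hlift : (zmultiplesHom A a) ((2 ^ (k + 1) : ℕ) : ℤ) = 0 := by
    show ((2 ^ (k + 1) : ℕ) : ℤ) • a = 0
    rw [natCast_zsmul, h2k1]
  let φ₁ : ZMod (2 ^ (k + 1)) →+ A := ZMod.lift _ ⟨zmultiplesHom A a, hlift⟩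
  have hφ₁ : ∀ n : ℤ, φ₁ ((n : ℤ) : ZMod (2 ^ (k + 1))) = n • a := fun n =>
    ZMod.lift_coe _ _ n
  -- the candidate isomorphism (inverse direction)
  let σ : C →+ A := S.subtype.comp eS.symm.toAddMonoidHom
  have hσ : ∀ c : C, σ c = ((eS.symm c : S) : A) := fun c => rfl
  let F : ZMod (2 ^ (k + 1)) × C →+ A :=
    (φ₁.comp (AddMonoidHom.fst _ _)) + (σ.comp (AddMonoidHom.snd _ _))
  have hF : ∀ (z : ZMod (2 ^ (k + 1))) (c : C), F (z, c) = φ₁ z + σ c := fun z c => rfl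
  have Fsurj : Function.Surjective F := by
    intro x
    obtain ⟨n, s, hsS, rfl⟩ := hdecompA x
    refine ⟨((n : ZMod (2 ^ (k + 1))), eS ⟨s, hsS⟩), ?_⟩
    have h1 : σ (eS ⟨s, hsS⟩) = s := by
      rw [hσ, eS.symm_apply_apply]
    rw [hF, hφ₁, h1]
  have Finj : Function.Injective F := by
    rw [injective_iff_map_eq_zero]
    rintro ⟨z, c⟩ hzc
    rw [hF, hσ] at hzc
    have hzval : φ₁ z = ((z.val : ℕ) : ℤ) • a := by
      have : z = (((z.val : ℕ) : ℤ) : ZMod (2 ^ (k + 1))) := by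
        rw [Int.cast_natCast]
        exact (ZMod.natCast_rightInverse z).symm
      conv_lhs => rw [this]
      exact hφ₁ _
    rw [hzval] at hzc
    have hmem : ((z.val : ℕ) : ℤ) • a ∈ S := by
      rw [eq_neg_of_add_eq_zero_left hzc]
      exact S.neg_mem (eS.symm c).2
    have hza0 : ((z.val : ℕ) : ℤ) • a = 0 := hdisj _ hmem
    have hs0 : ((eS.symm c : S) : A) = 0 := by
      rw [hza0, zero_add] at hzc
      exact hzc
    have hc0 : c = 0 := by
      have : eS.symm c = 0 := Subtype.ext hs0
      have := congrArg eS this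
      rwa [eS.apply_symm_apply, map_zero] at this
    have hz0 : z = 0 := by
      rw [natCast_zsmul] at hza0
      have hdvdv : 2 ^ (k + 1) ∣ z.val := by
        have h1 : addOrderOf a ∣ z.val := addOrderOf_dvd_of_nsmul_eq_zero hza0
        rwa [horder] at h1
      have hlt : z.val < 2 ^ (k + 1) := ZMod.val_lt z
      have hv0 : z.val = 0 := by
        rcases Nat.eq_zero_or_pos z.val with h0 | hpos
        · exact h0
        · exact absurd (Nat.le_of_dvd hpos hdvdv) (by omega)
      have := ZMod.natCast_rightInverse (n := 2 ^ (k + 1)) z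
      rw [hv0] at this
      rw [← this, Nat.cast_zero]
    rw [hz0, hc0]
    rfl
  exact ⟨(AddEquiv.ofBijective F ⟨Finj, Fsurj⟩).symm⟩
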